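/- Let w : ℤ → ℂ satisfy |w(n)| ≤ K for all n ∈ ℤ, and suppose w is arithmetic with constant C, i.e. |Σ_{a≡0 (mod ℓ)} 𝒞_{w_H}(a) − (1/ℓ)·Σ_{a∈ℤ} 𝒞_{w_H}(a)| ≤ C·H for every positive integer H and every 1 ≤ ℓ ≤ 2H. Then the normalized correlation 𝒞_{w_H}/H is also arithmetic; precisely, there exists C′ > 0 (depending only on K and C) such that for every positive integer H and every 1 ≤ q ≤ 2H, (1/(q·H²))·Σ_{j=1}^{q−1} |ŵ_H(j/q)|⁴ ≤ C′·H. -/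

import Mathlib

/-- `e(t) = e^{2πit}`. -/
noncomputable def eC (t : ℝ) : ℂ := Complex.exp (2 * Real.pi * Complex.I * t)

/-- The restriction `w_H` of a weight `w` to `[-H,H]`. -/
noncomputable def wres (w : ℤ → ℂ) (H : ℕ) (a : ℤ) : ℂ := if |a| ≤ (H : ℤ) then w a else 0

/-- The discrete Fourier transform `ŵ_H(α) = Σ_{|a|≤H} w(a) e(aα)`. -/
noncomputable def dft (w : ℤ → ℂ) (H : ℕ) (α : ℝ) : ℂ :=
  ∑ a ∈ Finset.Icc (-(H : ℤ)) (H : ℤ), w a * eC ((a : ℝ) * α)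

/-- The correlation `𝒞_{w_H}(a) = Σ_m w_H(m)·conj(w_H(m-a))`. -/
noncomputable def corrW (w : ℤ → ℂ) (H : ℕ) (a : ℤ) : ℂ :=
  ∑ m ∈ Finset.Icc (-(H : ℤ)) (H : ℤ), wres w H m * (starRingEnd ℂ) (wres w H (m - a))

lemma eC_mul_eC (s t : ℝ) : eC s * eC t = eC (s + t) := by
  rw [eC, eC, eC, ← Complex.exp_add]; push_cast; ring_nf

lemma conj_eC (t : ℝ) : (starRingEnd ℂ) (eC t) = eC (-t) := by
  rw [eC, eC, ← Complex.exp_conj]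
  congr 1
  simp only [map_mul, Complex.conj_I, Complex.conj_ofReal, map_ofNat]
  push_cast
  ring

lemma abs_eC (t : ℝ) : ‖eC t‖ = 1 := by
  rw [eC, Complex.norm_exp]
  norm_num [Complex.mul_re, Complex.mul_im]

lemma eC_zero : eC 0 = 1 := by simp [eC]

lemma eC_int (n : ℤ) : eC (n : ℝ) = 1 := by
  rw [eC]
  have := Complex.exp_int_mul_two_pi_mul_I n
  rw [← this]
  congr 1
  push_cast
  ring

lemma eC_pow (t : ℝ) (j : ℕ) : (eC t) ^ j = eC ((j : ℝ) * t) := by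
  rw [eC, eC, ← Complex.exp_nat_mul]
  congr 1
  push_cast
  ring

lemma orth (q : ℕ) (hq : 0 < q) (a : ℤ) :
    ∑ j ∈ Finset.range q, eC ((a : ℝ) * ((j : ℝ) / (q : ℝ))) =
      if (q : ℤ) ∣ a then (q : ℂ) else 0 := by
  have hq0 : (q : ℝ) ≠ 0 := Nat.cast_ne_zero.2 hq.ne'
  have hz : ∀ j : ℕ, eC ((a : ℝ) * ((j : ℝ) / (q : ℝ))) = (eC ((a : ℝ) / (q : ℝ))) ^ j := by
    intro j
    rw [eC_pow]
    congr 1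
    ring
  simp_rw [hz]
  by_cases hd : (q : ℤ) ∣ a
  · obtain ⟨k, hk⟩ := hd
    have : (a : ℝ) / (q : ℝ) = (k : ℝ) := by
      rw [hk]; push_cast; field_simp
    rw [this, eC_int, if_pos ⟨k, hk⟩]
    simp
  · have h2 : (2 * (Real.pi : ℂ) * Complex.I) ≠ 0 := by
      simp [Real.pi_ne_zero, Complex.I_ne_zero]
    have hne : eC ((a : ℝ) / (q : ℝ)) ≠ 1 := by
      intro h
      rw [eC, Complex.exp_eq_one_iff] at h
      obtain ⟨n, hn⟩ := h
      apply hd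
      have hcast : (((a : ℝ) / (q : ℝ) : ℝ) : ℂ) = (n : ℂ) := by
        refine mul_left_cancel₀ h2 ?_
        rw [hn]; ring
      have hr : (a : ℝ) / (q : ℝ) = (n : ℝ) := by exact_mod_cast hcast
      have hr2 : (a : ℝ) = (n : ℝ) * (q : ℝ) := by
        field_simp at hr; linarith
      have hr3 : (a : ℝ) = (q : ℝ) * (n : ℝ) := by linarith
      exact ⟨n, by exact_mod_cast hr3⟩
    have hpow : (eC ((a : ℝ) / (q : ℝ))) ^ q = 1 := by
      rw [eC_pow]
      have : (q : ℝ) * ((a : ℝ) / (q : ℝ)) = (a : ℝ) := by field_simp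
      rw [this, eC_int]
    rw [geom_sum_eq hne, hpow, if_neg hd]
    simp

lemma dft_eq_wres (w : ℤ → ℂ) (H : ℕ) (α : ℝ) :
    dft w H α = ∑ a ∈ Finset.Icc (-(H : ℤ)) (H : ℤ), wres w H a * eC ((a : ℝ) * α) := by
  refine Finset.sum_congr rfl fun a ha => ?_
  rw [Finset.mem_Icc] at ha
  rw [wres, if_pos (abs_le.2 ha)]

lemma dft_mul_conj (w : ℤ → ℂ) (H : ℕ) (α : ℝ) :
    dft w H α * (starRingEnd ℂ) (dft w H α) =
      ∑ a ∈ Finset.Icc (-(2 * H : ℤ)) (2 * H : ℤ), corrW w H a * eC ((a : ℝ) * α) := by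
  simp_rw [corrW, Finset.sum_mul]
  rw [Finset.sum_comm]
  have key : ∀ m ∈ Finset.Icc (-(H : ℤ)) (H : ℤ),
      (∑ a ∈ Finset.Icc (-(2 * H : ℤ)) (2 * H : ℤ),
        wres w H m * (starRingEnd ℂ) (wres w H (m - a)) * eC ((a : ℝ) * α)) =
      ∑ n ∈ Finset.Icc (-(H : ℤ)) (H : ℤ),
        (wres w H m * eC ((m : ℝ) * α)) * (starRingEnd ℂ) (wres w H n * eC ((n : ℝ) * α)) := by
    intro m hm
    rw [Finset.mem_Icc] at hm
    have step1 : (∑ a ∈ Finset.Icc (-(2 * H : ℤ)) (2 * H : ℤ),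
        wres w H m * (starRingEnd ℂ) (wres w H (m - a)) * eC ((a : ℝ) * α)) =
        ∑ n ∈ Finset.Icc (m - 2 * H) (m + 2 * H),
          wres w H m * (starRingEnd ℂ) (wres w H n) * eC (((m - n : ℤ) : ℝ) * α) := by
      refine Finset.sum_nbij' (fun a => m - a) (fun n => m - n) ?_ ?_ ?_ ?_ ?_
      · intro a ha
        rw [Finset.mem_Icc] at ha ⊢
        omega
      · intro n hn
        rw [Finset.mem_Icc] at hn ⊢
        omega
      · intro a _; ring
      · intro n _; ring
      · intro a _
        norm_num
    rw [step1]
    have step2 : ∑ n ∈ Finset.Icc (m - 2 * H) (m + 2 * H),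
          wres w H m * (starRingEnd ℂ) (wres w H n) * eC (((m - n : ℤ) : ℝ) * α) =
        ∑ n ∈ Finset.Icc (-(H : ℤ)) (H : ℤ),
          wres w H m * (starRingEnd ℂ) (wres w H n) * eC (((m - n : ℤ) : ℝ) * α) := by
      refine (Finset.sum_subset ?_ ?_).symm
      · intro n hn
        rw [Finset.mem_Icc] at hn ⊢
        omega
      · intro n _ hn
        rw [Finset.mem_Icc] at hn
        have : wres w H n = 0 := by
          rw [wres, if_neg]
          rw [abs_le]
          omega
        rw [this]
        simp
    rw [step2]
    refine Finset.sum_congr rfl fun n _ => ?_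
    rw [map_mul, conj_eC]
    have : eC (((m - n : ℤ) : ℝ) * α) = eC ((m : ℝ) * α) * eC (-((n : ℝ) * α)) := by
      rw [eC_mul_eC]
      congr 1
      push_cast
      ring
    rw [this]
    ring
  rw [Finset.sum_congr rfl key]
  rw [← Finset.sum_mul_sum, ← map_sum, ← dft_eq_wres]

theorem stmt10 (K C : ℝ) :
    ∃ C' : ℝ, 0 < C' ∧ ∀ w : ℤ → ℂ,
      (∀ n : ℤ, ‖w n‖ ≤ K) →
      (∀ H : ℕ, 0 < H → ∀ ℓ : ℕ, 1 ≤ ℓ → ℓ ≤ 2 * H →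
        ‖((∑ a ∈ (Finset.Icc (-(2 * H : ℤ)) (2 * H : ℤ)).filter (fun a => (ℓ : ℤ) ∣ a),
              corrW w H a) -
            (1 / (ℓ : ℂ)) * ∑ a ∈ Finset.Icc (-(2 * H : ℤ)) (2 * H : ℤ), corrW w H a)‖ ≤
          C * H) →
      ∀ H : ℕ, 0 < H → ∀ q : ℕ, 1 ≤ q → q ≤ 2 * H →
        (1 / ((q : ℝ) * (H : ℝ) ^ 2)) *
            ∑ j ∈ Finset.Ico 1 q, ‖dft w H ((j : ℝ) / (q : ℝ))‖ ^ 4 ≤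
          C' * H := by
  refine ⟨9 * K ^ 2 * |C| + 1, by positivity, ?_⟩
  intro w hK hA H hH q hq1 hq2
  have hqpos : 0 < q := hq1
  have hq0 : (0 : ℝ) < (q : ℝ) := by exact_mod_cast hqpos
  have hH0 : (0 : ℝ) < (H : ℝ) := by exact_mod_cast hH
  have hH1 : (1 : ℝ) ≤ (H : ℝ) := by exact_mod_cast hH
  have hK0 : 0 ≤ K := le_trans (norm_nonneg _) (hK 0)
  set f : ℕ → ℂ := fun j => dft w H ((j : ℝ) / (q : ℝ)) *
      (starRingEnd ℂ) (dft w H ((j : ℝ) / (q : ℝ))) with hf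
  set S : ℂ := ∑ a ∈ Finset.Icc (-(2 * H : ℤ)) (2 * H : ℤ), corrW w H a with hSdef
  set D : ℂ := ∑ a ∈ (Finset.Icc (-(2 * H : ℤ)) (2 * H : ℤ)).filter
      (fun a => (q : ℤ) ∣ a), corrW w H a with hDdef
  -- orthogonality sum
  have hsum : ∑ j ∈ Finset.range q, f j = (q : ℂ) * D := by
    simp only [hf, dft_mul_conj]
    rw [Finset.sum_comm]
    have hqD : (q : ℂ) * D = ∑ a ∈ Finset.Icc (-(2 * H : ℤ)) (2 * H : ℤ),
        if (q : ℤ) ∣ a then corrW w H a * (q : ℂ) else 0 := by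
      rw [← Finset.sum_filter, hDdef, mul_comm, Finset.sum_mul]
    rw [hqD]
    refine Finset.sum_congr rfl fun a _ => ?_
    rw [← Finset.mul_sum, orth q hqpos a, mul_ite, mul_zero]
  -- the j = 0 term
  have h0 : f 0 = S := by
    have : ((0 : ℕ) : ℝ) / (q : ℝ) = 0 := by norm_num
    simp only [hf, this, dft_mul_conj]
    refine Finset.sum_congr rfl fun a _ => ?_
    rw [mul_zero, eC_zero, mul_one]
  have hsplit : ∑ j ∈ Finset.range q, f j = f 0 + ∑ j ∈ Finset.Ico 1 q, f j := by
    rw [Finset.range_eq_Ico, Finset.sum_eq_sum_Ico_succ_bot hqpos]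
  set T : ℝ := ∑ j ∈ Finset.Ico 1 q, (‖dft w H ((j : ℝ) / (q : ℝ))‖) ^ 2 with hT
  have hTf : (T : ℂ) = ∑ j ∈ Finset.Ico 1 q, f j := by
    rw [hT]
    push_cast
    refine Finset.sum_congr rfl fun j _ => ?_
    rw [hf]
    dsimp only
    rw [← Complex.ofReal_pow, Complex.sq_norm, ← Complex.mul_conj]
  have hTc : (T : ℂ) = (q : ℂ) * (D - (1 / (q : ℂ)) * S) := by
    have hqC : (q : ℂ) ≠ 0 := by exact_mod_cast hqpos.ne'
    rw [hTf]
    have : ∑ j ∈ Finset.Ico 1 q, f j = (q : ℂ) * D - S := by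
      rw [← hsum, hsplit, h0]; ring
    rw [this]
    field_simp
  have hT_nonneg : 0 ≤ T := Finset.sum_nonneg fun j _ => by positivity
  have hT_le : T ≤ (q : ℝ) * (C * H) := by
    have habs := hA H hH q hq1 hq2
    calc T = ‖(T : ℂ)‖ := by
            rw [Complex.norm_of_nonneg hT_nonneg]
      _ = ‖(q : ℂ) * (D - (1 / (q : ℂ)) * S)‖ := by rw [hTc]
      _ = (q : ℝ) * ‖D - (1 / (q : ℂ)) * S‖ := by
            rw [norm_mul, Complex.norm_natCast]
      _ ≤ (q : ℝ) * (C * H) := mul_le_mul_of_nonneg_left habs hq0.le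
  -- pointwise bound on dft
  have hdft : ∀ α : ℝ, ‖dft w H α‖ ≤ 3 * (H : ℝ) * K := by
    intro α
    have hcard : ((Finset.Icc (-(H : ℤ)) (H : ℤ)).card : ℝ) = 2 * (H : ℝ) + 1 := by
      have : (Finset.Icc (-(H : ℤ)) (H : ℤ)).card = 2 * H + 1 := by
        rw [Int.card_Icc]
        omega
      rw [this]
      push_cast
      ring
    calc ‖dft w H α‖
        ≤ ∑ a ∈ Finset.Icc (-(H : ℤ)) (H : ℤ), ‖w a * eC ((a : ℝ) * α)‖ :=
          norm_sum_le _ _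
      _ ≤ ∑ _a ∈ Finset.Icc (-(H : ℤ)) (H : ℤ), K := by
          refine Finset.sum_le_sum fun a _ => ?_
          rw [norm_mul, abs_eC, mul_one]
          exact hK a
      _ = (2 * (H : ℝ) + 1) * K := by rw [Finset.sum_const, nsmul_eq_mul, hcard]
      _ ≤ 3 * (H : ℝ) * K := by nlinarith
  have h4 : ∑ j ∈ Finset.Ico 1 q, (‖dft w H ((j : ℝ) / (q : ℝ))‖) ^ 4 ≤
      9 * (H : ℝ) ^ 2 * K ^ 2 * T := by
    rw [hT, Finset.mul_sum]
    refine Finset.sum_le_sum fun j _ => ?_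
    have h1 := hdft ((j : ℝ) / (q : ℝ))
    have h2 : (0 : ℝ) ≤ ‖dft w H ((j : ℝ) / (q : ℝ))‖ := norm_nonneg _
    have habs2 : (‖dft w H ((j : ℝ) / (q : ℝ))‖) ^ 2 ≤ 9 * (H : ℝ) ^ 2 * K ^ 2 := by
      nlinarith
    calc (‖dft w H ((j : ℝ) / (q : ℝ))‖) ^ 4
        = (‖dft w H ((j : ℝ) / (q : ℝ))‖) ^ 2 *
          (‖dft w H ((j : ℝ) / (q : ℝ))‖) ^ 2 := by ring
      _ ≤ 9 * (H : ℝ) ^ 2 * K ^ 2 * (‖dft w H ((j : ℝ) / (q : ℝ))‖) ^ 2 :=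
          mul_le_mul_of_nonneg_right habs2 (by positivity)
  have hmain : (1 / ((q : ℝ) * (H : ℝ) ^ 2)) *
      ∑ j ∈ Finset.Ico 1 q, (‖dft w H ((j : ℝ) / (q : ℝ))‖) ^ 4 ≤
      9 * K ^ 2 * C * (H : ℝ) := by
    have step1 : (1 / ((q : ℝ) * (H : ℝ) ^ 2)) *
        ∑ j ∈ Finset.Ico 1 q, (‖dft w H ((j : ℝ) / (q : ℝ))‖) ^ 4 ≤
        (1 / ((q : ℝ) * (H : ℝ) ^ 2)) * (9 * (H : ℝ) ^ 2 * K ^ 2 * ((q : ℝ) * (C * H))) := by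
      refine mul_le_mul_of_nonneg_left ?_ (by positivity)
      exact h4.trans (mul_le_mul_of_nonneg_left hT_le (by positivity))
    have step2 : (1 / ((q : ℝ) * (H : ℝ) ^ 2)) * (9 * (H : ℝ) ^ 2 * K ^ 2 * ((q : ℝ) * (C * H))) =
        9 * K ^ 2 * C * (H : ℝ) := by
      field_simp
    linarith [step1, step2.le, step2.ge]
  refine hmain.trans ?_
  have hCabs : C ≤ |C| := le_abs_self C
  nlinarith [sq_nonneg K, mul_le_mul_of_nonneg_left hCabs (by positivity : (0:ℝ) ≤ 9 * K ^ 2)]
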